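/- Let $1<p\le 3/2$ and $\alpha\ge 0$. Define $G_\alpha(t)=\frac{1}{p}(\alpha+t^2)^{p/2}$. Then for every $t\in\mathbb{R}$, $|G_0'(t)-G_\alpha'(t)| \le \alpha^{(p-1)/2}$, where $G_0'(t)=|t|^{p-2}t$ and $G_\alpha'(t)=t(\alpha+t^2)^{(p-2)/2}$. -/

import Mathlib

open Real

lemma aux_subadd {a b : ℝ} (ha : 0 ≤ a) (hb : 0 ≤ b) {q : ℝ} (hq0 : 0 ≤ q) (hq1 : q ≤ 1) :
    (a + b) ^ q ≤ a ^ q + b ^ q := by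
  have h := NNReal.rpow_add_le_add_rpow a.toNNReal b.toNNReal hq0 hq1
  have h2 := NNReal.coe_le_coe.mpr h
  simpa [NNReal.coe_rpow, ha, hb] using h2

lemma aux_sq_rpow {s : ℝ} (hs : 0 ≤ s) (q : ℝ) : (s ^ 2) ^ q = s ^ (2 * q) := by
  rw [← Real.rpow_natCast s 2, ← Real.rpow_mul hs]
  norm_num

theorem stmt4 (p α : ℝ) (hp : 1 < p) (hp2 : p ≤ 3 / 2) (hα : 0 ≤ α) :
    ∀ t : ℝ, |(|t| ^ (p - 2) * t) - t * (α + t ^ 2) ^ ((p - 2) / 2)| ≤ α ^ ((p - 1) / 2) := by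
  intro t
  set s := |t| with hsdef
  have hs0 : 0 ≤ s := abs_nonneg t
  have hts : t ^ 2 = s ^ 2 := (sq_abs t).symm
  have hsq : (s ^ 2) ^ ((p - 2) / 2) = s ^ (p - 2) := by
    rw [aux_sq_rpow hs0]; ring_nf
  have key : |(|t| ^ (p - 2) * t) - t * (α + t ^ 2) ^ ((p - 2) / 2)|
      = s * |s ^ (p - 2) - (α + s ^ 2) ^ ((p - 2) / 2)| := by
    rw [hts, show |t| ^ (p - 2) * t - t * (α + s ^ 2) ^ ((p - 2) / 2)
        = t * (s ^ (p - 2) - (α + s ^ 2) ^ ((p - 2) / 2)) by rw [hsdef]; ring,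
      abs_mul]
  rw [key]
  rcases eq_or_lt_of_le hα with hα0 | hαpos
  · -- α = 0
    rw [← hα0, zero_add, hsq, sub_self, abs_zero, mul_zero]
    positivity
  rcases eq_or_lt_of_le hs0 with hs0' | hspos
  · rw [← hs0', zero_mul]; positivity
  -- s > 0, α > 0
  have hA : (0:ℝ) < α + s ^ 2 := by positivity
  have h1 : (α + s ^ 2) ^ ((p - 2) / 2) ≤ s ^ (p - 2) := by
    rw [← hsq]
    exact Real.rpow_le_rpow_of_nonpos (by positivity) (by linarith) (by linarith)
  rw [abs_of_nonneg (by linarith)]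
  -- goal: s * (s^(p-2) - (α+s²)^((p-2)/2)) ≤ α^((p-1)/2)
  have hsp1 : s * s ^ (p - 2) = s ^ (p - 1) := by
    nth_rewrite 1 [← Real.rpow_one s]
    rw [← Real.rpow_add hspos]; ring_nf
  rcases le_total (s ^ 2) α with hcase | hcase
  · -- s² ≤ α : bound by s^(p-1) ≤ α^((p-1)/2)
    have hsle : s ≤ α ^ ((1:ℝ)/2) := by
      have := Real.rpow_le_rpow (by positivity) hcase (by norm_num : (0:ℝ) ≤ 1/2)
      rwa [aux_sq_rpow hs0, show (2:ℝ) * (1/2) = 1 by norm_num, Real.rpow_one] at this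
    have h2 : s ^ (p - 1) ≤ (α ^ ((1:ℝ)/2)) ^ (p - 1) :=
      Real.rpow_le_rpow hs0 hsle (by linarith)
    rw [← Real.rpow_mul hα, show (1:ℝ)/2 * (p - 1) = (p - 1) / 2 by ring] at h2
    have h3 : s * (s ^ (p - 2) - (α + s ^ 2) ^ ((p - 2) / 2)) ≤ s * s ^ (p - 2) := by
      have hApos : 0 ≤ (α + s ^ 2) ^ ((p - 2) / 2) := by positivity
      nlinarith
    calc s * (s ^ (p - 2) - (α + s ^ 2) ^ ((p - 2) / 2)) ≤ s ^ (p - 1) := by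
          rw [← hsp1]; exact h3
      _ ≤ α ^ ((p - 1) / 2) := h2
  · -- α ≤ s²
    set A := (α + s ^ 2) ^ ((p - 2) / 2) with hAdef
    have hApos : 0 < A := Real.rpow_pos_of_pos hA _
    have hAinv : A * (α + s ^ 2) ^ ((2 - p) / 2) = 1 := by
      rw [hAdef, ← Real.rpow_add hA, show (p - 2) / 2 + (2 - p) / 2 = 0 by ring,
        Real.rpow_zero]
    have hsinv : s ^ (p - 2) * s ^ (2 - p) = 1 := by
      rw [← Real.rpow_add hspos, show p - 2 + (2 - p) = 0 by ring, Real.rpow_zero]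
    -- subadditivity
    have hsub : (α + s ^ 2) ^ ((2 - p) / 2) ≤ α ^ ((2 - p) / 2) + s ^ (2 - p) := by
      have := aux_subadd hα (by positivity : (0:ℝ) ≤ s ^ 2)
        (by linarith : (0:ℝ) ≤ (2 - p) / 2) (by linarith : (2 - p) / 2 ≤ 1)
      rwa [aux_sq_rpow hs0, show (2:ℝ) * ((2 - p) / 2) = 2 - p by ring] at this
    -- multiply by s^(p-1) * A
    have hsp1pos : (0:ℝ) < s ^ (p - 1) := Real.rpow_pos_of_pos hspos _
    have hmul : s ^ (p - 1) - s * A ≤ s ^ (p - 1) * A * α ^ ((2 - p) / 2) := by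
      have h := mul_le_mul_of_nonneg_left hsub (le_of_lt (mul_pos hsp1pos hApos))
      have e1 : s ^ (p - 1) * A * (α + s ^ 2) ^ ((2 - p) / 2) = s ^ (p - 1) := by
        rw [mul_assoc, hAinv, mul_one]
      have e2 : s ^ (p - 1) * A * (α ^ ((2 - p) / 2) + s ^ (2 - p))
          = s ^ (p - 1) * A * α ^ ((2 - p) / 2) + s * A := by
        have : s ^ (p - 1) * s ^ (2 - p) = s := by
          rw [← Real.rpow_add hspos, show p - 1 + (2 - p) = 1 by ring, Real.rpow_one]
        nlinarith [this]
      rw [e1, e2] at h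
      linarith
    -- bound s^(p-1)*A*α^((2-p)/2)
    have hα2 : (0:ℝ) ≤ α ^ ((2 - p) / 2) := by positivity
    have hb1 : s ^ (p - 1) * A * α ^ ((2 - p) / 2)
        ≤ s ^ (p - 1) * s ^ (p - 2) * α ^ ((2 - p) / 2) := by
      have := mul_le_mul_of_nonneg_left h1 (le_of_lt hsp1pos)
      exact mul_le_mul_of_nonneg_right this hα2
    have hb2 : s ^ (p - 1) * s ^ (p - 2) = s ^ (2 * p - 3) := by
      rw [← Real.rpow_add hspos]; ring_nf
    have hαhalf : α ^ ((1:ℝ)/2) ≤ s := by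
      have h := Real.rpow_le_rpow hα hcase (by norm_num : (0:ℝ) ≤ 1/2)
      rwa [aux_sq_rpow hs0, show (2:ℝ) * (1/2) = 1 by norm_num, Real.rpow_one] at h
    have hb3 : s ^ (2 * p - 3) ≤ α ^ ((2 * p - 3) / 2) := by
      have h := Real.rpow_le_rpow_of_nonpos (Real.rpow_pos_of_pos hαpos _) hαhalf
        (by linarith : 2 * p - 3 ≤ 0)
      rwa [← Real.rpow_mul hα, show (1:ℝ)/2 * (2 * p - 3) = (2 * p - 3) / 2 by ring] at h
    have hb4 : α ^ ((2 * p - 3) / 2) * α ^ ((2 - p) / 2) = α ^ ((p - 1) / 2) := by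
      rw [← Real.rpow_add hαpos]; ring_nf
    calc s * (s ^ (p - 2) - A) = s ^ (p - 1) - s * A := by rw [mul_sub, hsp1]
      _ ≤ s ^ (p - 1) * A * α ^ ((2 - p) / 2) := hmul
      _ ≤ s ^ (p - 1) * s ^ (p - 2) * α ^ ((2 - p) / 2) := hb1
      _ = s ^ (2 * p - 3) * α ^ ((2 - p) / 2) := by rw [hb2]
      _ ≤ α ^ ((2 * p - 3) / 2) * α ^ ((2 - p) / 2) := by
          exact mul_le_mul_of_nonneg_right hb3 hα2
      _ = α ^ ((p - 1) / 2) := hb4
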